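/- Let p be an odd prime with Legendre symbol (−7/p) = −1, and suppose that p ≡ 3 (mod 8) or p ≡ 7 (mod 16). Then v_{2k}(−3,4) ≢ 0 (mod p) for every positive integer k. -/

import Mathlib

open Polynomial

/-- Companion Lucas sequence: `v 0 = 2`, `v 1 = A`, `v (n+2) = A·v (n+1) − B·v n`. -/
def lucasV (A B : ℤ) : ℕ → ℤ
  | 0 => 2
  | 1 => A
  | n + 2 => A * lucasV A B (n + 1) - B * lucasV A B n

lemma lucasV_cast {R : Type*} [CommRing R] (A B : ℤ) (a b : R)
    (hs : a + b = (A : R)) (hm : a * b = (B : R)) :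
    ∀ n, ((lucasV A B n : ℤ) : R) = a ^ n + b ^ n
  | 0 => by norm_num [lucasV]
  | 1 => by simp [lucasV, hs]
  | (n+2) => by
    have h1 := lucasV_cast A B a b hs hm (n+1)
    have h0 := lucasV_cast A B a b hs hm n
    show (((A * lucasV A B (n + 1) - B * lucasV A B n : ℤ)) : R) = _
    push_cast
    rw [h1, h0, ← hs, ← hm]
    ring

theorem lucasV_neg_three_four_not_dvd (p : ℕ) [Fact p.Prime] (hodd : p % 2 = 1)
    (h7 : legendreSym p (-7) = -1) (hp : p % 8 = 3 ∨ p % 16 = 7) :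
    ∀ k : ℕ, 0 < k → ¬ (p : ℤ) ∣ lucasV (-3) 4 (2 * k) := by
  intro k hk hdvd
  have hprime : p.Prime := Fact.out
  have hp2 : 2 < p := by rcases hp with h | h <;> omega
  have h7s : ¬ IsSquare ((-7 : ℤ) : ZMod p) := (legendreSym.eq_neg_one_iff p).mp h7
  -- the quadratic X² - X + 2 over ZMod p
  set f : (ZMod p)[X] := X ^ 2 - X + C 2 with hf
  have hdeg : f.natDegree = 2 := by unfold f; compute_degree!
  have hfne : f ≠ 0 := by
    intro h; rw [h] at hdeg; simp at hdeg
  have hnoroot : ∀ c : ZMod p, c ^ 2 - c + 2 ≠ 0 := by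
    intro c hc
    apply h7s
    refine ⟨2 * c - 1, ?_⟩
    push_cast
    linear_combination (-4 : ZMod p) * hc
  have hroots : f.roots = 0 := by
    rw [Multiset.eq_zero_iff_forall_notMem]
    intro c hc
    rw [mem_roots hfne] at hc
    simp only [IsRoot, hf, eval_add, eval_sub, eval_pow, eval_X, eval_C] at hc
    exact hnoroot c hc
  have hirr : Irreducible f :=
    (irreducible_iff_roots_eq_zero_of_degree_le_three (by omega) (by omega)).mpr hroots
  haveI : Fact (Irreducible f) := ⟨hirr⟩
  set K := AdjoinRoot f with hK
  set π : K := AdjoinRoot.root f with hπdef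
  have hπ : π ^ 2 - π + 2 = 0 := by
    have h0 := AdjoinRoot.eval₂_root f
    simp only [hf, eval₂_add, eval₂_sub, eval₂_pow, eval₂_X, eval₂_C] at h0
    rw [show (AdjoinRoot.of f) (2 : ZMod p) = (2 : K) from map_ofNat _ 2] at h0
    exact h0
  have hinj : Function.Injective (algebraMap (ZMod p) K) := (algebraMap (ZMod p) K).injective
  have h2K : (2 : K) ≠ 0 := by
    intro h
    have h2 : (2 : ZMod p) = 0 := by
      apply hinj
      rw [map_ofNat, map_zero]
      exact h
    have h2' : ((2 : ℕ) : ZMod p) = 0 := by exact_mod_cast h2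
    rw [ZMod.natCast_eq_zero_iff] at h2'
    have := Nat.le_of_dvd (by norm_num) h2'
    omega
  have hπ0 : π ≠ 0 := by
    intro h
    rw [h] at hπ
    apply h2K
    linear_combination hπ
  -- finiteness
  let pb := AdjoinRoot.powerBasis hfne
  haveI : Fintype K := Module.fintypeOfFintype pb.basis
  have hcard : Fintype.card K = p ^ 2 := by
    rw [Module.card_eq_pow_finrank (K := ZMod p) (V := K), ZMod.card]
    congr 1
    rw [show Module.finrank (ZMod p) K = pb.dim from pb.finrank, AdjoinRoot.powerBasis_dim, hdeg]
  haveI : CharP K p := charP_of_injective_algebraMap hinj p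
  -- Frobenius: π ^ p = 1 - π
  have h2p : (2 : K) ^ p = 2 := by
    have h2a : (2 : K) = algebraMap (ZMod p) K 2 := by rw [map_ofNat]
    rw [h2a, ← map_pow, ZMod.pow_card]
  have hfrobroot : (π ^ p) ^ 2 - π ^ p + 2 = 0 := by
    have h := congrArg (· ^ p) hπ
    simp only [zero_pow hprime.ne_zero] at h
    rw [add_pow_char, sub_pow_char, h2p, ← pow_mul, mul_comm 2 p, pow_mul] at h
    exact h
  have hcases : π ^ p = π ∨ π ^ p = 1 - π := by
    have hmul : (π ^ p - π) * (π ^ p - (1 - π)) = 0 := by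
      linear_combination hfrobroot - hπ
    rcases mul_eq_zero.mp hmul with h | h
    · exact Or.inl (sub_eq_zero.mp h)
    · exact Or.inr (sub_eq_zero.mp h)
  have hπnot : ∀ c : ZMod p, π ≠ algebraMap (ZMod p) K c := by
    intro c hc
    apply hnoroot c
    apply hinj
    rw [map_add, map_sub, map_pow, map_ofNat, map_zero, ← hc]
    exact hπ
  have hfrob : π ^ p = 1 - π := by
    rcases hcases with hfix | h
    · exfalso
      set g : K[X] := X ^ p - X with hg
      have hgne : g ≠ 0 := FiniteField.X_pow_card_sub_X_ne_zero K (by omega)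
      set Z : Finset K := insert π (Finset.univ.image (algebraMap (ZMod p) K)) with hZ
      have hsub : Z.val ⊆ g.roots := by
        intro x hx
        have hx' : x ∈ Z := Finset.mem_val.mp hx
        rw [mem_roots hgne]
        rcases Finset.mem_insert.mp hx' with rfl | hx2
        · simp only [IsRoot, hg, eval_sub, eval_pow, eval_X]
          rw [hfix, sub_self]
        · obtain ⟨c, -, rfl⟩ := Finset.mem_image.mp hx2
          simp only [IsRoot, hg, eval_sub, eval_pow, eval_X]
          rw [← map_pow, ZMod.pow_card, sub_self]
      have hcard2 : Z.card ≤ g.natDegree := card_le_degree_of_subset_roots hsub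
      have hgdeg : g.natDegree = p := FiniteField.X_pow_card_sub_X_natDegree_eq K (by omega)
      have hnotmem : π ∉ Finset.univ.image (algebraMap (ZMod p) K) := by
        simp only [Finset.mem_image]
        rintro ⟨c, -, hc⟩
        exact hπnot c hc.symm
      have hZcard : Z.card = p + 1 := by
        rw [hZ, Finset.card_insert_of_notMem hnotmem,
          Finset.card_image_of_injective _ hinj, Finset.card_univ, ZMod.card]
      omega
    · exact h
  -- cast of the Lucas sequence into K
  have hs : π ^ 2 + (1 - π) ^ 2 = ((-3 : ℤ) : K) := by
    push_cast
    linear_combination 2 * hπ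
  have hm : π ^ 2 * (1 - π) ^ 2 = ((4 : ℤ) : K) := by
    push_cast
    linear_combination (π ^ 2 - π - 2) * hπ
  have hcast := lucasV_cast (-3) 4 (π ^ 2) ((1 - π) ^ 2) hs hm (2 * k)
  have hzero : (π ^ 2) ^ (2 * k) + ((1 - π) ^ 2) ^ (2 * k) = 0 := by
    rw [← hcast]
    have hz : ((lucasV (-3) 4 (2 * k) : ℤ) : ZMod p) = 0 := by
      rwa [ZMod.intCast_zmod_eq_zero_iff_dvd]
    calc ((lucasV (-3) 4 (2 * k) : ℤ) : K)
        = algebraMap (ZMod p) K ((lucasV (-3) 4 (2 * k) : ℤ) : ZMod p) := by rw [map_intCast]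
      _ = 0 := by rw [hz, map_zero]
  set T : K := π ^ (p - 1) with hT
  have hTk : T ^ (4 * k) = -1 := by
    have e1 : (π ^ 2) ^ (2 * k) = π ^ (4 * k) := by
      rw [← pow_mul]; congr 1; ring
    have e2 : ((1 - π) ^ 2) ^ (2 * k) = π ^ (4 * k) * T ^ (4 * k) := by
      rw [← hfrob, ← pow_mul, ← pow_mul, hT, ← pow_mul, ← pow_add]
      congr 1
      obtain ⟨q, rfl⟩ : ∃ q, p = q + 1 := ⟨p - 1, by omega⟩
      simp only [Nat.add_sub_cancel]
      ring
    rw [e1, e2] at hzero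
    have h4 : π ^ (4 * k) ≠ 0 := pow_ne_zero _ hπ0
    have hfac : π ^ (4 * k) * (1 + T ^ (4 * k)) = 0 := by linear_combination hzero
    rcases mul_eq_zero.mp hfac with h | h
    · exact absurd h h4
    · linear_combination h
  obtain ⟨m, hmodd, hTm⟩ : ∃ m : ℕ, m % 2 = 1 ∧ T ^ (4 * m) = 1 := by
    rcases hp with h8 | h16
    · refine ⟨(p + 1) / 4, by omega, ?_⟩
      have h4m : 4 * ((p + 1) / 4) = p + 1 := by omega
      rw [h4m, hT, ← pow_mul]
      have hexp : (p - 1) * (p + 1) = p ^ 2 - 1 := by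
        obtain ⟨n, rfl⟩ : ∃ n, p = n + 2 := ⟨p - 2, by omega⟩
        have e1 : n + 2 - 1 = n + 1 := by omega
        rw [e1]
        have e2 : (n + 2) ^ 2 = (n + 1) * (n + 2 + 1) + 1 := by ring
        omega
      rw [hexp, ← hcard]
      exact FiniteField.pow_card_sub_one_eq_one π hπ0
    · refine ⟨(p + 1) / 8, by omega, ?_⟩
      have h4m : 4 * ((p + 1) / 8) = (p + 1) / 2 := by omega
      rw [h4m, hT, ← pow_mul]
      have hππ : π ^ (p + 1) = 2 := by
        rw [pow_succ, hfrob]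
        linear_combination -hπ
      have hexp : (p - 1) * ((p + 1) / 2) = (p + 1) * (p / 2) := by
        obtain ⟨r, rfl⟩ : ∃ r, p = 2 * r + 1 := ⟨p / 2, by omega⟩
        have e1 : 2 * r + 1 - 1 = 2 * r := by omega
        have e2 : (2 * r + 1 + 1) / 2 = r + 1 := by omega
        have e3 : (2 * r + 1) / 2 = r := by omega
        rw [e1, e2, e3]; ring
      rw [hexp, pow_mul, hππ]
      have h2sq : IsSquare (2 : ZMod p) :=
        (ZMod.exists_sq_eq_two_iff (by omega)).mpr (Or.inr (by omega))
      have h2ne : (2 : ZMod p) ≠ 0 := by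
        intro h
        apply h2K
        have := congrArg (algebraMap (ZMod p) K) h
        rwa [map_ofNat, map_zero] at this
      have heul : (2 : ZMod p) ^ (p / 2) = 1 := (ZMod.euler_criterion p h2ne).mp h2sq
      calc (2 : K) ^ (p / 2)
          = algebraMap (ZMod p) K ((2 : ZMod p) ^ (p / 2)) := by rw [map_pow, map_ofNat]
        _ = 1 := by rw [heul, map_one]
  have hcontr : (-1 : K) = 1 := by
    calc (-1 : K) = (T ^ (4 * k)) ^ m := by
          rw [hTk, Odd.neg_one_pow (Nat.odd_iff.mpr hmodd)]
      _ = (T ^ (4 * m)) ^ k := by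
          rw [← pow_mul, ← pow_mul, hT, ← pow_mul, ← pow_mul]; congr 1; ring
      _ = 1 := by rw [hTm, one_pow]
  apply h2K
  linear_combination -hcontr
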